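/- Let H be a real Hilbert space, let V_j for j in a finite index set J be closed subspaces, and let V = ∑_{j∈J} V_j (assumed closed). Suppose there exists ψ_J ∈ (0,1] such that ‖∑_{j∈J} g_j‖² ≥ ψ_J² ∑_{j∈J} ‖g_j‖² for all choices g_j ∈ V_j. Then for every f in a finite-dimensional situation where each V_j is finite-dimensional, the orthogonal projection satisfies ‖Π_V f‖² ≤ ψ_J^{−2} ∑_{j∈J} ‖Π_{V_j} f‖². -/

import Mathlib

open Finset

/-- Projection comparison: if the finite-dimensional subspaces `V j` satisfy
`‖∑ g j‖² ≥ ψ² ∑ ‖g j‖²` for all choices `g j ∈ V j`, then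
`‖Π_V f‖² ≤ ψ⁻² ∑ j ‖Π_{V j} f‖²` where `V = ∑ j V j`. -/
theorem stmt_8 {H : Type*} [NormedAddCommGroup H] [InnerProductSpace ℝ H] [CompleteSpace H]
    {J : Type*} [Fintype J] (V : J → Submodule ℝ H) [∀ j, FiniteDimensional ℝ (V j)]
    [∀ j, Submodule.HasOrthogonalProjection (V j)] [Submodule.HasOrthogonalProjection (⨆ j, V j)]
    (ψ : ℝ) (hψ0 : 0 < ψ) (hψ1 : ψ ≤ 1)
    (hre : ∀ g : J → H, (∀ j, g j ∈ V j) →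
      ψ ^ 2 * ∑ j, ‖g j‖ ^ 2 ≤ ‖∑ j, g j‖ ^ 2) :
    ∀ f : H, ‖(((⨆ j, V j).orthogonalProjectionOnto f : _) : H)‖ ^ 2 ≤
      (ψ ^ 2)⁻¹ * ∑ j, ‖(((V j).orthogonalProjectionOnto f : _) : H)‖ ^ 2 := by
  intro f
  set p : H := (((⨆ j, V j).orthogonalProjectionOnto f : _) : H) with hp
  set S : ℝ := ∑ j, ‖(((V j).orthogonalProjectionOnto f : _) : H)‖ ^ 2 with hS
  have hS0 : 0 ≤ S := Finset.sum_nonneg fun j _ => sq_nonneg _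
  have hψ2 : (0:ℝ) < ψ ^ 2 := pow_pos hψ0 2
  have hpmem : p ∈ ⨆ j, V j := ((⨆ j, V j).orthogonalProjectionOnto f).2
  obtain ⟨g, hg, hgsum⟩ := (Submodule.mem_iSup_iff_exists_finsupp _ _).mp hpmem
  have hsum : ∑ j, g j = p := by
    rw [← hgsum, Finsupp.sum_fintype]
    intro i; rfl
  -- Step 1: ‖p‖² = ∑ ⟪Π_j f, g j⟫
  have h1 : ‖p‖ ^ 2 = ∑ j, (inner ℝ (((V j).orthogonalProjectionOnto f : _) : H) (g j) : ℝ) := by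
    have hfp : (inner ℝ (f - p) p : ℝ) = 0 :=
      Submodule.starProjection_inner_eq_zero f p hpmem
    have hfp' : (inner ℝ f p : ℝ) = ‖p‖ ^ 2 := by
      have := hfp
      rw [inner_sub_left, sub_eq_zero] at this
      rw [this, real_inner_self_eq_norm_sq]
    calc ‖p‖ ^ 2 = (inner ℝ f p : ℝ) := hfp'.symm
      _ = ∑ j, (inner ℝ f (g j) : ℝ) := by rw [← hsum, inner_sum]
      _ = ∑ j, (inner ℝ (((V j).orthogonalProjectionOnto f : _) : H) (g j) : ℝ) := by
          refine Finset.sum_congr rfl fun j _ => ?_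
          have h0 : (inner ℝ (f - (((V j).orthogonalProjectionOnto f : _) : H)) (g j) : ℝ) = 0 :=
            Submodule.starProjection_inner_eq_zero f (g j) (hg j)
          rw [inner_sub_left, sub_eq_zero] at h0
          exact h0
  -- Step 2: Cauchy-Schwarz
  have h2 : ‖p‖ ^ 2 ≤ ∑ j, ‖(((V j).orthogonalProjectionOnto f : _) : H)‖ * ‖g j‖ := by
    rw [h1]
    exact Finset.sum_le_sum fun j _ => real_inner_le_norm _ _
  have h3 : (∑ j, ‖(((V j).orthogonalProjectionOnto f : _) : H)‖ * ‖g j‖) ^ 2 ≤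
      S * ∑ j, ‖g j‖ ^ 2 :=
    hS ▸ Finset.sum_mul_sq_le_sq_mul_sq _ _ _
  clear_value p S
  -- Step 3: conditioning
  have h4 : ∑ j, ‖g j‖ ^ 2 ≤ (ψ ^ 2)⁻¹ * ‖p‖ ^ 2 := by
    have h := hre g hg
    rw [hsum] at h
    calc ∑ j, ‖g j‖ ^ 2 = (ψ ^ 2)⁻¹ * (ψ ^ 2 * ∑ j, ‖g j‖ ^ 2) := by
          field_simp
      _ ≤ (ψ ^ 2)⁻¹ * ‖p‖ ^ 2 := mul_le_mul_of_nonneg_left h (by positivity)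
  have hgsq0 : 0 ≤ ∑ j, ‖g j‖ ^ 2 := Finset.sum_nonneg fun j _ => sq_nonneg _
  have h5 : (‖p‖ ^ 2) ^ 2 ≤ S * ((ψ ^ 2)⁻¹ * ‖p‖ ^ 2) := by
    calc (‖p‖ ^ 2) ^ 2 ≤ (∑ j, ‖(((V j).orthogonalProjectionOnto f : _) : H)‖ * ‖g j‖) ^ 2 := by
          apply pow_le_pow_left₀ (sq_nonneg _) h2
      _ ≤ S * ∑ j, ‖g j‖ ^ 2 := h3
      _ ≤ S * ((ψ ^ 2)⁻¹ * ‖p‖ ^ 2) := by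
          exact mul_le_mul_of_nonneg_left h4 hS0
  rcases eq_or_lt_of_le (sq_nonneg ‖p‖) with h0 | h0
  · rw [← h0]
    exact mul_nonneg (by positivity) hS0
  · have := (mul_le_mul_iff_of_pos_right h0).mp (by linarith [h5] : ‖p‖ ^ 2 * ‖p‖ ^ 2 ≤ ((ψ ^ 2)⁻¹ * S) * ‖p‖ ^ 2)
    linarith [this]
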